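/- If G is a bipartite graph that contains a subgraph θ_{2,2,2n} with n ≥ 2, then m(G) = 3. -/

import Mathlib

/- # Preliminaries: the online list-coloring (painting) game -/

namespace PaintGame

open SimpleGraph

/-- `X` is an independent set of vertices of `G`. -/
def IndepOn {V : Type} (G : SimpleGraph V) (X : Finset V) : Prop :=
  ∀ u ∈ X, ∀ w ∈ X, ¬ G.Adj u w

/-- Decrease the remaining mark-capacity of every vertex in the marked set `M` by one. -/
def decMark {V : Type} [DecidableEq V] (f : V → ℕ) (M : Finset V) : V → ℕ :=
  fun v => if v ∈ M then f v - 1 else f v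

theorem decMark_lt {V : Type} [Fintype V] [DecidableEq V] (f : V → ℕ) (M : Finset V)
    (hne : M.Nonempty) (hf : ∀ v ∈ M, 1 ≤ f v) :
    ∑ v, decMark f M v < ∑ v, f v := by
  obtain ⟨v₀, hv₀⟩ := hne
  apply Finset.sum_lt_sum
  · intro i _
    unfold decMark
    split <;> omega
  · refine ⟨v₀, Finset.mem_univ v₀, ?_⟩
    have := hf v₀ hv₀
    simp only [decMark, if_pos hv₀]
    omega

/-- Painter wins the (unbounded) painting game on `G` from the position in which `U` is the
set of uncolored vertices and `f v` is the number of further times `v` may be marked.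
Each round, Lister marks a nonempty set `M` of uncolored vertices, each of which may still
be marked; Painter then colors an independent subset `X` of `M`.  Painter wins when every
vertex is colored; Painter has lost if some uncolored vertex can no longer be marked. -/
def PaintFrom {V : Type} [Fintype V] [DecidableEq V] (G : SimpleGraph V)
    (f : V → ℕ) (U : Finset V) : Prop :=
  U = ∅ ∨ ((∀ v ∈ U, 1 ≤ f v) ∧
    ∀ M : Finset V, M ⊆ U → (hne : M.Nonempty) → (hf : ∀ v ∈ M, 1 ≤ f v) →
      ∃ X : Finset V, X ⊆ M ∧ IndepOn G X ∧ PaintFrom G (decMark f M) (U \ X))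
termination_by ∑ v, f v
decreasing_by exact decMark_lt f M hne hf

/-- `G` is `f`-paintable: Painter can guarantee that every vertex of `G` gets colored
while no vertex `v` is marked more than `f v` times. -/
def Paintable {V : Type} [Fintype V] [DecidableEq V] (G : SimpleGraph V) (f : V → ℕ) : Prop :=
  PaintFrom G f Finset.univ

/-- Painter wins the painting game on `G` lasting exactly `t` further rounds, where `U`
is the set of uncolored vertices and each vertex `v` must be marked in exactly `f v` of the
remaining rounds.  Each round Lister marks a nonempty set `M` of vertices that can still be
marked (colored vertices may be marked, since the marked sets are the color classes of a
fixed list assignment using exactly `t` colors); Painter colors an independent set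
`X ⊆ M` of uncolored vertices.  At the end, Painter wins if every vertex got colored, or by
default if Lister failed to mark every vertex `v` exactly `f v` times. -/
def PaintFromIn {V : Type} [DecidableEq V] (G : SimpleGraph V) :
    ℕ → (V → ℕ) → Finset V → Prop
  | 0, f, U => U = ∅ ∨ ∃ v, f v ≠ 0
  | (t + 1), f, U =>
      ∀ M : Finset V, M.Nonempty → (∀ v ∈ M, 1 ≤ f v) →
        ∃ X : Finset V, X ⊆ M ∩ U ∧ IndepOn G X ∧
          PaintFromIn G t (decMark f M) (U \ X)

/-- `G` is `[f,t]`-paintable: Painter can guarantee that every vertex gets colored in the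
painting game on `G` lasting exactly `t` rounds, in which Lister must mark each vertex `v`
in exactly `f v` of the `t` (nonempty) marked sets. -/
def PaintableIn {V : Type} [Fintype V] [DecidableEq V]
    (G : SimpleGraph V) (f : V → ℕ) (t : ℕ) : Prop :=
  PaintFromIn G t f Finset.univ

/-- `m(G,f)`: the minimum `t ≥ max {f v : v ∈ V(G)}` for which `G` is not
`[f,t]`-paintable. -/
noncomputable def mval {V : Type} [Fintype V] [DecidableEq V]
    (G : SimpleGraph V) (f : V → ℕ) : ℕ :=
  sInf {t | (∀ v, f v ≤ t) ∧ ¬ PaintableIn G f t}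

/-- `M(G,f)`: the maximum `t` for which `G` is not `[f,t]`-paintable. -/
noncomputable def Mval {V : Type} [Fintype V] [DecidableEq V]
    (G : SimpleGraph V) (f : V → ℕ) : ℕ :=
  sSup {t | ¬ PaintableIn G f t}

/-- `ListerForce G f U c`: in the painting game on `G` (uncolored set `U`, each vertex `v`
markable at most `f v` more times), Lister can force the appearance of an uncolorable vertex
(an uncolored vertex that can no longer be marked) while spending at most `c` in total,
where a round with marked set `M` costs `|M| - 1`. -/
def ListerForce {V : Type} [Fintype V] [DecidableEq V] (G : SimpleGraph V)
    (f : V → ℕ) (U : Finset V) (c : ℕ) : Prop :=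
  (∃ v ∈ U, f v = 0) ∨
    ∃ M : Finset V, M ⊆ U ∧ ∃ hne : M.Nonempty, ∃ hf : ∀ v ∈ M, 1 ≤ f v,
      ∃ c', M.card - 1 + c' ≤ c ∧
        ∀ X : Finset V, X ⊆ M → IndepOn G X →
          ListerForce G (decMark f M) (U \ X) c'
termination_by ∑ v, f v
decreasing_by exact decMark_lt f M hne hf

/-- `q(G,f)`: the minimum total cost `Σᵢ (|Vᵢ| - 1)` that Lister can guarantee while
forcing an uncolorable vertex, over plays in which each vertex `v` is marked at most
`f v` times. -/
noncomputable def qval {V : Type} [Fintype V] [DecidableEq V]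
    (G : SimpleGraph V) (f : V → ℕ) : ℕ :=
  sInf {c | ListerForce G f Finset.univ c}

/- # Graph containments -/

/-- `G` contains an odd cycle. -/
def HasOddCycle {V : Type} (G : SimpleGraph V) : Prop :=
  ∃ (v : V) (c : G.Walk v v), c.IsCycle ∧ Odd c.length

/-- `G` contains a triangle `C₃`. -/
def HasTriangle {V : Type} (G : SimpleGraph V) : Prop :=
  ∃ u v w : V, G.Adj u v ∧ G.Adj v w ∧ G.Adj u w

/-- `G` contains the theta graph `θ_{p,q,r}`: two vertices joined by three internally
disjoint paths with `p`, `q` and `r` edges respectively. -/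
def HasTheta {V : Type} (G : SimpleGraph V) (p q r : ℕ) : Prop :=
  ∃ (u v : V) (P Q R : G.Walk u v),
    P.IsPath ∧ Q.IsPath ∧ R.IsPath ∧
    P.length = p ∧ Q.length = q ∧ R.length = r ∧
    (∀ x, x ∈ P.support → x ∈ Q.support → x = u ∨ x = v) ∧
    (∀ x, x ∈ P.support → x ∈ R.support → x = u ∨ x = v) ∧
    (∀ x, x ∈ Q.support → x ∈ R.support → x = u ∨ x = v)

/-- `G` contains a graph of the form `C_m·P_k·C_n`: two cycles joined by a path, the
cycles being vertex disjoint, except that when the path is trivial (`k = 1`) the two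
cycles share exactly one vertex. -/
def HasDumbbell {V : Type} (G : SimpleGraph V) : Prop :=
  ∃ (a b : V) (c : G.Walk a a) (d : G.Walk b b) (W : G.Walk a b),
    c.IsCycle ∧ d.IsCycle ∧ W.IsPath ∧
    (∀ x, x ∈ c.support → x ∈ d.support → x = a ∧ x = b) ∧
    (∀ x, x ∈ W.support → x ∈ c.support → x = a) ∧
    (∀ x, x ∈ W.support → x ∈ d.support → x = b)

/-- `G` contains a copy of `H` as a (not necessarily induced) subgraph. -/
def ContainsCopy {W V : Type} (H : SimpleGraph W) (G : SimpleGraph V) : Prop :=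
  ∃ φ : H →g G, Function.Injective φ

/-- `G` contains a member of the family `𝔉₃`: some `θ_{p,q,r}` that is not isomorphic to
any `θ_{2,2,2k}`. -/
def ContainsF3 {V : Type} (G : SimpleGraph V) : Prop :=
  ∃ p q r : ℕ, HasTheta G p q r ∧ ∀ k : ℕ, ({p, q, r} : Multiset ℕ) ≠ {2, 2, 2 * k}

/-- `G` contains a member of the family `𝔉₄ = {θ_{2,2,2k} : k ≥ 2}`. -/
def ContainsF4 {V : Type} (G : SimpleGraph V) : Prop :=
  ∃ k : ℕ, 2 ≤ k ∧ HasTheta G 2 2 (2 * k)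

/- # The core of a graph -/

open Classical in
/-- Delete from `S` all vertices having exactly one neighbour (in `G`) inside `S`. -/
noncomputable def coreStep {V : Type} [DecidableEq V] (G : SimpleGraph V)
    (S : Finset V) : Finset V :=
  S.filter fun v => ¬ ((S.filter fun w => G.Adj v w).card = 1)

/-- The vertex set of the core of `G`: iteratively delete all vertices of degree 1. -/
noncomputable def coreSet {V : Type} [Fintype V] [DecidableEq V] (G : SimpleGraph V) :
    Finset V :=
  (coreStep G)^[Fintype.card V] Finset.univ

/-- The core of `G`: the subgraph of `G` obtained by the iterated removal of all
vertices of degree 1. -/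
noncomputable def coreGraph {V : Type} [Fintype V] [DecidableEq V] (G : SimpleGraph V) :
    SimpleGraph ↥((coreSet G : Set V)) :=
  G.induce (coreSet G : Set V)

end PaintGame

open SimpleGraph PaintGame

section Aux

variable {V : Type} [Fintype V] [DecidableEq V]

lemma paintFromIn_zero_iff (G : SimpleGraph V) (f : V → ℕ) (U : Finset V) :
    PaintFromIn G 0 f U ↔ (U = ∅ ∨ ∃ v, f v ≠ 0) := Iff.rfl

lemma paintFromIn_one_iff (G : SimpleGraph V) (f : V → ℕ) (U : Finset V) :
    PaintFromIn G 1 f U ↔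
      ∀ M : Finset V, M.Nonempty → (∀ v ∈ M, 1 ≤ f v) →
        ∃ X : Finset V, X ⊆ M ∩ U ∧ IndepOn G X ∧
          PaintFromIn G 0 (decMark f M) (U \ X) := Iff.rfl

lemma paintFromIn_two_iff (G : SimpleGraph V) (f : V → ℕ) (U : Finset V) :
    PaintFromIn G 2 f U ↔
      ∀ M : Finset V, M.Nonempty → (∀ v ∈ M, 1 ≤ f v) →
        ∃ X : Finset V, X ⊆ M ∩ U ∧ IndepOn G X ∧
          PaintFromIn G 1 (decMark f M) (U \ X) := Iff.rfl

lemma paintFromIn_three_iff (G : SimpleGraph V) (f : V → ℕ) (U : Finset V) :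
    PaintFromIn G 3 f U ↔
      ∀ M : Finset V, M.Nonempty → (∀ v ∈ M, 1 ≤ f v) →
        ∃ X : Finset V, X ⊆ M ∩ U ∧ IndepOn G X ∧
          PaintFromIn G 2 (decMark f M) (U \ X) := Iff.rfl

lemma path_start_ne_end {G : SimpleGraph V} {x y : V} (W : G.Walk x y)
    (hp : W.IsPath) (hl : W.length ≠ 0) : x ≠ y := by
  cases W with
  | nil => simp at hl
  | cons h W' =>
    rw [SimpleGraph.Walk.cons_isPath_iff] at hp
    intro he
    exact hp.2 (by rw [he]; exact W'.end_mem_support)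

lemma walk_parity {G : SimpleGraph V} (S X₁ : Finset V)
    (key : ∀ p q : V, G.Adj p q → p ∉ X₁ → q ∉ X₁ → ((p ∈ S) ↔ ¬ q ∈ S)) :
    ∀ {x y : V} (W : G.Walk x y), (∀ z ∈ W.support, z ∉ X₁) →
      (((x ∈ S) ↔ (y ∈ S)) ↔ Even W.length) := by
  intro x y W
  induction W with
  | nil => intro _; simp
  | @cons x p y h W ih =>
    intro hs
    have hx : x ∉ X₁ := hs x (Walk.start_mem_support _)
    have hp : p ∉ X₁ := hs p (by
      rw [Walk.support_cons]; exact List.mem_cons_of_mem _ (Walk.start_mem_support _))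
    have k := key x p h hx hp
    have i := ih (fun z hz => hs z (by
      rw [Walk.support_cons]; exact List.mem_cons_of_mem _ hz))
    rw [Walk.length_cons, Nat.even_add_one]
    tauto

set_option maxHeartbeats 1000000 in
lemma lister_endgame (G : SimpleGraph V)
    (M₁ X₁ : Finset V) (hX₁ : X₁ ⊆ M₁)
    (x y : V) (hx : x ∈ M₁ \ X₁) (hy : y ∈ M₁ \ X₁)
    (W : G.Walk x y) (hWs : ∀ z ∈ W.support, z ∉ X₁)
    (hxy : Even W.length → x ≠ y)
    (hM : ∃ z, z ∉ M₁) :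
    ¬ PaintFromIn G 2 (decMark (fun _ => 2) M₁) (Finset.univ \ X₁) := by
  classical
  intro h2
  rw [paintFromIn_two_iff] at h2
  obtain ⟨z₀, hz₀⟩ := hM
  set D : Finset V := if Even W.length then {x} else {x, y} with hD
  set A₂ : Finset V := (M₁ \ X₁) ∩ D with hA₂def
  set A₃ : Finset V := (M₁ \ X₁) \ D with hA₃def
  set M₂ : Finset V := Finset.univ.filter (fun v => v ∉ M₁ ∨ v ∈ X₁ ∨ v ∈ A₂) with hM₂def
  set M₃ : Finset V := Finset.univ.filter (fun v => v ∉ M₁ ∨ v ∈ A₃) with hM₃def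
  have hxD : x ∈ D := by rw [hD]; split <;> simp
  have hxA₂ : x ∈ A₂ := Finset.mem_inter.mpr ⟨hx, hxD⟩
  have hyA₃ : Even W.length → y ∈ A₃ := fun he => Finset.mem_sdiff.mpr ⟨hy, by
    rw [hD, if_pos he]
    intro hmem
    exact (hxy he) (Finset.mem_singleton.mp hmem).symm⟩
  have hyA₂ : ¬ Even W.length → y ∈ A₂ := fun ho => Finset.mem_inter.mpr ⟨hy, by
    rw [hD, if_neg ho]; simp⟩
  have hmemM₂ : ∀ v, v ∈ M₂ ↔ (v ∉ M₁ ∨ v ∈ X₁ ∨ v ∈ A₂) := by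
    intro v; rw [hM₂def]; simp [Finset.mem_filter]
  have hmemM₃ : ∀ v, v ∈ M₃ ↔ (v ∉ M₁ ∨ v ∈ A₃) := by
    intro v; rw [hM₃def]; simp [Finset.mem_filter]
  have hA₂sub : ∀ v ∈ A₂, v ∈ M₁ ∧ v ∉ X₁ ∧ v ∈ D := by
    intro v hv
    rw [hA₂def, Finset.mem_inter, Finset.mem_sdiff] at hv
    tauto
  have hA₃sub : ∀ v ∈ A₃, v ∈ M₁ ∧ v ∉ X₁ ∧ v ∉ D := by
    intro v hv
    rw [hA₃def, Finset.mem_sdiff, Finset.mem_sdiff] at hv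
    tauto
  have hsplit : ∀ v, v ∈ M₁ → v ∉ X₁ → v ∉ A₂ → v ∈ A₃ := by
    intro v h1 h2' h3
    rw [hA₃def, Finset.mem_sdiff, Finset.mem_sdiff]
    refine ⟨⟨h1, h2'⟩, fun hd => h3 ?_⟩
    rw [hA₂def, Finset.mem_inter, Finset.mem_sdiff]
    exact ⟨⟨h1, h2'⟩, hd⟩
  have hf₁ : ∀ v ∈ M₂, 1 ≤ decMark (fun _ => 2) M₁ v := by
    intro v _
    simp only [decMark]
    split <;> omega
  obtain ⟨X₂, hX₂sub, hX₂ind, h1⟩ :=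
    h2 M₂ ⟨x, (hmemM₂ x).mpr (Or.inr (Or.inr hxA₂))⟩ hf₁
  rw [paintFromIn_one_iff] at h1
  have hz₀M₃ : z₀ ∈ M₃ := (hmemM₃ z₀).mpr (Or.inl hz₀)
  have hf₂ : ∀ v ∈ M₃, 1 ≤ decMark (decMark (fun _ => 2) M₁) M₂ v := by
    intro v hv
    rcases (hmemM₃ v).mp hv with h' | h'
    · simp only [decMark, if_neg h']
      split <;> omega
    · obtain ⟨hvM, hvX, hvD⟩ := hA₃sub v h'
      have hvM₂ : v ∉ M₂ := fun hc => by
        rcases (hmemM₂ v).mp hc with h'' | h'' | h''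
        · exact h'' hvM
        · exact hvX h''
        · exact hvD (hA₂sub v h'').2.2
      simp only [decMark, if_neg hvM₂, if_pos hvM]
      omega
  obtain ⟨X₃, hX₃sub, hX₃ind, h0⟩ := h1 M₃ ⟨z₀, hz₀M₃⟩ hf₂
  rw [paintFromIn_zero_iff] at h0
  have hall : ∀ v, decMark (decMark (decMark (fun _ => 2) M₁) M₂) M₃ v = 0 := by
    intro v
    by_cases h₁ : v ∈ M₁
    · by_cases h₂ : v ∈ X₁
      · have hm₂ : v ∈ M₂ := (hmemM₂ v).mpr (Or.inr (Or.inl h₂))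
        have hm₃ : v ∉ M₃ := fun hc => by
          rcases (hmemM₃ v).mp hc with h' | h'
          · exact h' h₁
          · exact (hA₃sub v h').2.1 h₂
        simp only [decMark, if_neg hm₃, if_pos hm₂, if_pos h₁]
      · by_cases h₃ : v ∈ A₂
        · have hm₂ : v ∈ M₂ := (hmemM₂ v).mpr (Or.inr (Or.inr h₃))
          have hm₃ : v ∉ M₃ := fun hc => by
            rcases (hmemM₃ v).mp hc with h' | h'
            · exact h' h₁
            · exact (hA₃sub v h').2.2 (hA₂sub v h₃).2.2
          simp only [decMark, if_neg hm₃, if_pos hm₂, if_pos h₁]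
        · have hA₃v : v ∈ A₃ := hsplit v h₁ h₂ h₃
          have hm₂ : v ∉ M₂ := fun hc => by
            rcases (hmemM₂ v).mp hc with h' | h' | h'
            · exact h' h₁
            · exact h₂ h'
            · exact h₃ h'
          have hm₃ : v ∈ M₃ := (hmemM₃ v).mpr (Or.inr hA₃v)
          simp only [decMark, if_pos hm₃, if_neg hm₂, if_pos h₁]
    · have hm₂ : v ∈ M₂ := (hmemM₂ v).mpr (Or.inl h₁)
      have hm₃ : v ∈ M₃ := (hmemM₃ v).mpr (Or.inl h₁)
      simp only [decMark, if_pos hm₃, if_pos hm₂, if_neg h₁]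
  have hU₃ : (((Finset.univ \ X₁) \ X₂) \ X₃) = ∅ := by
    rcases h0 with h | ⟨v, hv⟩
    · exact h
    · exact absurd (hall v) hv
  by_cases hA2X : ∀ w ∈ A₂, w ∈ X₂
  · by_cases hadj : ∃ p ∈ (Finset.univ \ X₁) \ X₂, ∃ q ∈ (Finset.univ \ X₁) \ X₂, G.Adj p q
    · obtain ⟨p, hp, q, hq, hpq⟩ := hadj
      by_cases hpX₃ : p ∈ X₃
      · by_cases hqX₃ : q ∈ X₃
        · exact hX₃ind p hpX₃ q hqX₃ hpq
        · have hq' : q ∈ ((Finset.univ \ X₁) \ X₂) \ X₃ := Finset.mem_sdiff.mpr ⟨hq, hqX₃⟩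
          rw [hU₃] at hq'
          exact absurd hq' (Finset.notMem_empty q)
      · have hp' : p ∈ ((Finset.univ \ X₁) \ X₂) \ X₃ := Finset.mem_sdiff.mpr ⟨hp, hpX₃⟩
        rw [hU₃] at hp'
        exact absurd hp' (Finset.notMem_empty p)
    · have key : ∀ p q : V, G.Adj p q → p ∉ X₁ → q ∉ X₁ → ((p ∈ X₂) ↔ ¬ q ∈ X₂) := by
        intro p q hpq hp hq
        by_cases h₁ : p ∈ X₂ <;> by_cases h₂ : q ∈ X₂
        · exact absurd hpq (hX₂ind p h₁ q h₂)
        · exact ⟨fun _ => h₂, fun _ => h₁⟩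
        · exact ⟨fun hp' => absurd hp' h₁, fun hq' => absurd h₂ hq'⟩
        · refine absurd ⟨p, ?_, q, ?_, hpq⟩ hadj
          · exact Finset.mem_sdiff.mpr ⟨Finset.mem_sdiff.mpr ⟨Finset.mem_univ p, hp⟩, h₁⟩
          · exact Finset.mem_sdiff.mpr ⟨Finset.mem_sdiff.mpr ⟨Finset.mem_univ q, hq⟩, h₂⟩
      have alt := walk_parity X₂ X₁ key W hWs
      by_cases hE : Even W.length
      · have hyX : y ∉ X₂ := by
          have hyM₂ : y ∉ M₂ := fun hc => by
            rcases (hmemM₂ y).mp hc with h' | h' | h'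
            · exact h' (Finset.mem_sdiff.mp hy).1
            · exact (Finset.mem_sdiff.mp hy).2 h'
            · exact (hA₃sub y (hyA₃ hE)).2.2 (hA₂sub y h').2.2
          intro hc
          exact hyM₂ (Finset.mem_inter.mp (hX₂sub hc)).1
        have hxX : x ∈ X₂ := hA2X x hxA₂
        exact absurd ((alt.mpr hE).mp hxX) hyX
      · have hxX : x ∈ X₂ := hA2X x hxA₂
        have hyX : y ∈ X₂ := hA2X y (hyA₂ hE)
        exact hE (alt.mp ⟨fun _ => hyX, fun _ => hxX⟩)
  · push_neg at hA2X
    obtain ⟨w, hwA₂, hwX₂⟩ := hA2X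
    have hwM₃ : w ∉ M₃ := fun hc => by
      rcases (hmemM₃ w).mp hc with h' | h'
      · exact h' (hA₂sub w hwA₂).1
      · exact (hA₃sub w h').2.2 (hA₂sub w hwA₂).2.2
    have hw : w ∈ ((Finset.univ \ X₁) \ X₂) \ X₃ := by
      refine Finset.mem_sdiff.mpr ⟨Finset.mem_sdiff.mpr ⟨?_, hwX₂⟩, ?_⟩
      · exact Finset.mem_sdiff.mpr ⟨Finset.mem_univ w, (hA₂sub w hwA₂).2.1⟩
      · exact fun hc => hwM₃ (Finset.mem_inter.mp (hX₃sub hc)).1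
    rw [hU₃] at hw
    exact absurd hw (Finset.notMem_empty w)

lemma painter_two (G : SimpleGraph V) (hbip : G.Colorable 2) :
    PaintableIn G (fun _ => 2) 2 := by
  classical
  obtain ⟨c⟩ := hbip
  have htwo : ∀ i : Fin 2, i ≠ 0 → i = 1 := by decide
  rw [PaintableIn, paintFromIn_two_iff]
  intro M₁ hne₁ hf₁
  refine ⟨(M₁ ∩ Finset.univ).filter (fun z => c z = 0), Finset.filter_subset _ _, ?_, ?_⟩
  · intro p hp q hq hadj
    rw [Finset.mem_filter] at hp hq
    exact c.valid hadj (hp.2.trans hq.2.symm)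
  · rw [paintFromIn_one_iff]
    intro M₂ hne₂ hf₂
    set X₁ : Finset V := (M₁ ∩ Finset.univ).filter (fun z => c z = 0) with hX₁def
    set U₁ : Finset V := Finset.univ \ X₁ with hU₁def
    refine ⟨(M₂ ∩ U₁).filter (fun z => c z = 1), Finset.filter_subset _ _, ?_, ?_⟩
    · intro p hp q hq hadj
      rw [Finset.mem_filter] at hp hq
      exact c.valid hadj (hp.2.trans hq.2.symm)
    · rw [paintFromIn_zero_iff]
      by_cases hall : ∀ v : V, v ∈ M₁ ∧ v ∈ M₂
      · left
        rw [Finset.eq_empty_iff_forall_notMem]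
        intro v hv
        rw [Finset.mem_sdiff] at hv
        have hv1 := hv.1
        rw [hU₁def, Finset.mem_sdiff] at hv1
        have hc0 : c v ≠ 0 := fun h => hv1.2 (by
          rw [hX₁def, Finset.mem_filter]
          exact ⟨Finset.mem_inter.mpr ⟨(hall v).1, Finset.mem_univ v⟩, h⟩)
        exact hv.2 (Finset.mem_filter.mpr
          ⟨Finset.mem_inter.mpr ⟨(hall v).2, hv.1⟩, htwo _ hc0⟩)
      · right
        push_neg at hall
        obtain ⟨v, hv⟩ := hall
        refine ⟨v, ?_⟩
        by_cases h₁ : v ∈ M₁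
        · have h₂ : v ∉ M₂ := hv h₁
          simp only [decMark, if_pos h₁, if_neg h₂]
          omega
        · simp only [decMark, if_neg h₁]
          split <;> omega

end Aux


/-- Lemma `theta3`.  If `G` is a bipartite graph that contains a
subgraph `θ_{2,2,2n}` with `n ≥ 2`, then `m(G) = 3`. -/
theorem mval_eq_three_of_theta22even {V : Type} [Fintype V] [DecidableEq V]
    (G : SimpleGraph V) (hbip : G.Colorable 2) (n : ℕ) (hn : 2 ≤ n)
    (hθ : PaintGame.HasTheta G 2 2 (2 * n)) :
    PaintGame.mval G (fun _ => 2) = 3 := by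
  classical
  obtain ⟨u, v, P, Q, R, hP, hQ, hR, hPl, hQl, hRl, hPQ, hPR, hQR⟩ := hθ
  have huv : u ≠ v := path_start_ne_end P hP (by rw [hPl]; omega)
  set a := P.getVert 1 with ha
  set b := Q.getVert 1 with hb
  have hua : G.Adj u a := by
    have h := P.adj_getVert_succ (i := 0) (by rw [hPl]; norm_num)
    rwa [P.getVert_zero] at h
  have hav : G.Adj a v := by
    have h := P.adj_getVert_succ (i := 1) (by rw [hPl]; norm_num)
    rw [show (1:ℕ)+1 = P.length by rw [hPl], P.getVert_length] at h
    exact h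
  have hub : G.Adj u b := by
    have h := Q.adj_getVert_succ (i := 0) (by rw [hQl]; norm_num)
    rwa [Q.getVert_zero] at h
  have hbv : G.Adj b v := by
    have h := Q.adj_getVert_succ (i := 1) (by rw [hQl]; norm_num)
    rw [show (1:ℕ)+1 = Q.length by rw [hQl], Q.getVert_length] at h
    exact h
  have hau : a ≠ u := fun h => G.loopless.irrefl u (h ▸ hua)
  have hav' : a ≠ v := fun h => G.loopless.irrefl v (h ▸ hav)
  have hbu : b ≠ u := fun h => G.loopless.irrefl u (h ▸ hub)
  have hbv' : b ≠ v := fun h => G.loopless.irrefl v (h ▸ hbv)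
  have haP : a ∈ P.support :=
    Walk.mem_support_iff_exists_getVert.mpr ⟨1, rfl, by rw [hPl]; norm_num⟩
  have hbQ : b ∈ Q.support :=
    Walk.mem_support_iff_exists_getVert.mpr ⟨1, rfl, by rw [hQl]; norm_num⟩
  have hab : a ≠ b := fun h => by
    rcases hPQ a haP (h ▸ hbQ) with h' | h'
    · exact hau h'
    · exact hav' h'
  obtain ⟨y₁, h₁, R₁, rfl⟩ := Walk.exists_eq_cons_of_ne huv R
  rw [Walk.cons_isPath_iff] at hR
  rw [Walk.length_cons] at hRl
  have hR₁l : R₁.length = 2 * n - 1 := by omega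
  have hy₁v : y₁ ≠ v := path_start_ne_end R₁ hR.1 (by omega)
  obtain ⟨y₂, h₂, R₂, hR₂eq⟩ := Walk.exists_eq_cons_of_ne (Ne.symm hy₁v) R₁.reverse
  have hR₂path' : (Walk.cons h₂ R₂).IsPath := by rw [← hR₂eq]; exact hR.1.reverse
  rw [Walk.cons_isPath_iff] at hR₂path'
  have hR₂l : R₂.length = 2 * n - 2 := by
    have hl := congrArg Walk.length hR₂eq
    rw [Walk.length_reverse, Walk.length_cons] at hl
    omega
  set T := R₂.reverse with hT
  have hTl : T.length = 2 * n - 2 := by rw [hT, Walk.length_reverse]; exact hR₂l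
  have hTpath : T.IsPath := hR₂path'.1.reverse
  have hy₁y₂ : y₁ ≠ y₂ := path_start_ne_end T hTpath (by rw [hTl]; omega)
  have hR₂subR₁ : ∀ z ∈ R₂.support, z ∈ R₁.support := by
    intro z hz
    have h' : z ∈ (Walk.cons h₂ R₂).support := by
      rw [Walk.support_cons]; exact List.mem_cons_of_mem _ hz
    rw [← hR₂eq, Walk.support_reverse, List.mem_reverse] at h'
    exact h'
  have hTsupp : ∀ z ∈ T.support, z ∈ R₂.support := by
    intro z hz; rwa [hT, Walk.support_reverse, List.mem_reverse] at hz
  have hTu : ∀ z ∈ T.support, z ≠ u := by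
    intro z hz he; exact hR.2 (he ▸ hR₂subR₁ z (hTsupp z hz))
  have hTv : ∀ z ∈ T.support, z ≠ v := by
    intro z hz he; exact hR₂path'.2 (he ▸ hTsupp z hz)
  have hy₂v : G.Adj y₂ v := h₂.symm
  have hy₁u : y₁ ≠ u := fun h => G.loopless.irrefl u (h ▸ h₁)
  have hy₂v' : y₂ ≠ v := fun h => G.loopless.irrefl v (h ▸ hy₂v)
  have hy₂u : y₂ ≠ u := hTu y₂ T.end_mem_support
  have hy₁R : y₁ ∈ (Walk.cons h₁ R₁).support := by
    rw [Walk.support_cons]; exact List.mem_cons_of_mem _ R₁.start_mem_support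
  have hy₂R : y₂ ∈ (Walk.cons h₁ R₁).support := by
    rw [Walk.support_cons]; exact List.mem_cons_of_mem _ (hR₂subR₁ y₂ R₂.start_mem_support)
  have hby₁ : b ≠ y₁ := fun h => by
    rcases hQR b hbQ (h ▸ hy₁R) with h' | h'
    · exact hbu h'
    · exact hbv' h'
  have hby₂ : b ≠ y₂ := fun h => by
    rcases hQR b hbQ (h ▸ hy₂R) with h' | h'
    · exact hbu h'
    · exact hbv' h'
  set M₁ : Finset V := {u, v, a, y₁, y₂} with hM₁def
  have hbM : b ∉ M₁ := by
    rw [hM₁def]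
    simp only [Finset.mem_insert, Finset.mem_singleton]
    push_neg
    exact ⟨hbu, hbv', Ne.symm hab, hby₁, hby₂⟩
  have hnot3 : ¬ PaintableIn G (fun _ => 2) 3 := by
    intro h3
    rw [PaintableIn, paintFromIn_three_iff] at h3
    obtain ⟨X₁, hX₁sub, hX₁ind, h2⟩ := h3 M₁ ⟨u, by rw [hM₁def]; simp⟩
      (fun w _ => one_le_two)
    have hX₁M : X₁ ⊆ M₁ := fun z hz => (Finset.mem_inter.mp (hX₁sub hz)).1
    have huM : u ∈ M₁ := by rw [hM₁def]; simp
    have hvM : v ∈ M₁ := by rw [hM₁def]; simp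
    have haM : a ∈ M₁ := by rw [hM₁def]; simp
    have hy₁M : y₁ ∈ M₁ := by rw [hM₁def]; simp
    have hy₂M : y₂ ∈ M₁ := by rw [hM₁def]; simp
    by_cases hu : u ∈ X₁ <;> by_cases hv : v ∈ X₁
    · -- both u and v colored: use the interior of the long path
      have hX₁uv : ∀ z ∈ X₁, z = u ∨ z = v := by
        intro z hz
        have hzM := hX₁M hz
        rw [hM₁def] at hzM
        simp only [Finset.mem_insert, Finset.mem_singleton] at hzM
        rcases hzM with h | h | h | h | h
        · exact Or.inl h
        · exact Or.inr h
        · exact absurd hua (hX₁ind u hu a (h ▸ hz))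
        · exact absurd h₁ (hX₁ind u hu y₁ (h ▸ hz))
        · exact absurd hy₂v (hX₁ind y₂ (h ▸ hz) v hv)
      refine lister_endgame G M₁ X₁ hX₁M y₁ y₂
        (Finset.mem_sdiff.mpr ⟨hy₁M, fun hc => by
          rcases hX₁uv y₁ hc with h | h
          · exact hy₁u h
          · exact hy₁v h⟩)
        (Finset.mem_sdiff.mpr ⟨hy₂M, fun hc => by
          rcases hX₁uv y₂ hc with h | h
          · exact hy₂u h
          · exact hy₂v' h⟩)
        T
        (fun z hz hc => by
          rcases hX₁uv z hc with h | h
          · exact hTu z hz h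
          · exact hTv z hz h)
        (fun _ => hy₁y₂) ⟨b, hbM⟩ h2
    · -- u colored, v not: adjacent pair (a, v)
      have haX : a ∉ X₁ := fun h => absurd hua (hX₁ind u hu a h)
      refine lister_endgame G M₁ X₁ hX₁M a v
        (Finset.mem_sdiff.mpr ⟨haM, haX⟩)
        (Finset.mem_sdiff.mpr ⟨hvM, hv⟩)
        (Walk.cons hav Walk.nil)
        (fun z hz => by
          simp only [Walk.support_cons, Walk.support_nil, List.mem_cons,
            List.mem_singleton, List.not_mem_nil, or_false] at hz
          rcases hz with h | h
          · exact h ▸ haX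
          · exact h ▸ hv)
        (fun h => absurd h (by simp [Walk.length_cons, Walk.length_nil]))
        ⟨b, hbM⟩ h2
    · -- v colored, u not: adjacent pair (a, u)
      have haX : a ∉ X₁ := fun h => absurd hav (hX₁ind a h v hv)
      refine lister_endgame G M₁ X₁ hX₁M a u
        (Finset.mem_sdiff.mpr ⟨haM, haX⟩)
        (Finset.mem_sdiff.mpr ⟨huM, hu⟩)
        (Walk.cons hua.symm Walk.nil)
        (fun z hz => by
          simp only [Walk.support_cons, Walk.support_nil, List.mem_cons,
            List.mem_singleton, List.not_mem_nil, or_false] at hz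
          rcases hz with h | h
          · exact h ▸ haX
          · exact h ▸ hu)
        (fun h => absurd h (by simp [Walk.length_cons, Walk.length_nil]))
        ⟨b, hbM⟩ h2
    · -- neither colored: walk u - b - v
      have hbX : b ∉ X₁ := fun h => hbM (hX₁M h)
      refine lister_endgame G M₁ X₁ hX₁M u v
        (Finset.mem_sdiff.mpr ⟨huM, hu⟩)
        (Finset.mem_sdiff.mpr ⟨hvM, hv⟩)
        (Walk.cons hub (Walk.cons hbv Walk.nil))
        (fun z hz => by
          simp only [Walk.support_cons, Walk.support_nil, List.mem_cons,
            List.mem_singleton, List.not_mem_nil, or_false] at hz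
          rcases hz with h | h | h
          · exact h ▸ hu
          · exact h ▸ hbX
          · exact h ▸ hv)
        (fun _ => huv) ⟨b, hbM⟩ h2
  have hpaint2 : PaintableIn G (fun _ => 2) 2 := painter_two G hbip
  have h3mem : 3 ∈ {t | (∀ w : V, (fun _ => 2) w ≤ t) ∧ ¬ PaintableIn G (fun _ => 2) t} :=
    ⟨fun _ => by norm_num, hnot3⟩
  have hmin : ∀ t ∈ {t | (∀ w : V, (fun _ => 2) w ≤ t) ∧ ¬ PaintableIn G (fun _ => 2) t},
      3 ≤ t := by
    rintro t ⟨ht1, ht2⟩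
    by_contra hlt
    push_neg at hlt
    interval_cases t
    · exact absurd (ht1 u) (by norm_num)
    · exact absurd (ht1 u) (by norm_num)
    · exact ht2 hpaint2
  rw [PaintGame.mval]
  exact le_antisymm (Nat.sInf_le h3mem) (hmin _ (Nat.sInf_mem ⟨3, h3mem⟩))
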